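/- Let d ≥ 3 and let Λ be a random sequence in the unit ball 𝔹_d ⊂ ℂ^d. If ∑_{m=0}^∞ N_m 2^{−m} = ∞, then almost surely Λ is not uniformly separated (ℙ(𝒰(𝔹_d)) = 0). -/

import Mathlib

open MeasureTheory ProbabilityTheory ENNReal

noncomputable section

/-- We endow `EuclideanSpace ℂ (Fin d)` with its Borel `σ`-algebra. -/
instance (d : ℕ) : MeasurableSpace (EuclideanSpace ℂ (Fin d)) := borel _

instance (d : ℕ) : BorelSpace (EuclideanSpace ℂ (Fin d)) := ⟨rfl⟩

/-- The pseudo-hyperbolic distance `ρ(z,w) = |φ_z(w)|` on the unit ball `𝔹_d ⊂ ℂ^d`, defined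
via the identity `1 - ρ(z,w)² = (1-|z|²)(1-|w|²)/|1-⟨w,z⟩|²`. -/
def ballRho {d : ℕ} (z w : EuclideanSpace ℂ (Fin d)) : ℝ :=
  Real.sqrt (1 - (1 - ‖z‖ ^ 2) * (1 - ‖w‖ ^ 2) / ‖1 - @inner ℂ _ _ w z‖ ^ 2)

/-- A random sequence `λ_j = ρ_j ξ_j` in the unit ball `𝔹_d ⊂ ℂ^d`: deterministic radii
`ρ_j ∈ [0,1)` and an independent sequence `(ξ_j)` of random variables uniformly distributed
on the unit sphere.  Uniformity is expressed by invariance of the distribution of each `ξ_j`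
under every unitary transformation, which uniquely characterizes the normalized surface
measure among probability distributions supported on the sphere. -/
structure RandomBallSeq (d : ℕ) (Ω : Type*) [MeasurableSpace Ω]
    (P : MeasureTheory.Measure Ω) where
  rad : ℕ → ℝ
  rad_mem : ∀ j, rad j ∈ Set.Ico (0 : ℝ) 1
  ξ : ℕ → Ω → EuclideanSpace ℂ (Fin d)
  ξ_meas : ∀ j, Measurable (ξ j)
  ξ_sphere : ∀ j ω, ‖ξ j ω‖ = 1
  ξ_indep : iIndepFun ξ P
  ξ_unif : ∀ (j : ℕ) (U : EuclideanSpace ℂ (Fin d) ≃ₗᵢ[ℂ] EuclideanSpace ℂ (Fin d)),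
      MeasureTheory.Measure.map (fun ω => U (ξ j ω)) P = MeasureTheory.Measure.map (ξ j) P

namespace RandomBallSeq

variable {d : ℕ} {Ω : Type*} [MeasurableSpace Ω] {P : MeasureTheory.Measure Ω}

/-- The random point `λ_j(ω) = ρ_j ξ_j(ω) ∈ 𝔹_d`. -/
def pt (Λ : RandomBallSeq d Ω P) (j : ℕ) (ω : Ω) : EuclideanSpace ℂ (Fin d) :=
  Λ.rad j • Λ.ξ j ω

/-- `N_m = #{j : m (ln 2)/2 ≤ β(0, λ_j) < (m+1)(ln 2)/2}` where
`β(0,z) = (1/2) log((1+|z|)/(1-|z|))` is the Bergman distance from the origin; since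
`|λ_j| = ρ_j`, this is deterministic. -/
def N (Λ : RandomBallSeq d Ω P) (m : ℕ) : ℝ≥0∞ :=
  ({j : ℕ |
      (m : ℝ) * Real.log 2 / 2 ≤ (1 / 2) * Real.log ((1 + Λ.rad j) / (1 - Λ.rad j)) ∧
      (1 / 2) * Real.log ((1 + Λ.rad j) / (1 - Λ.rad j)) < ((m : ℝ) + 1) * Real.log 2 / 2
    }).encard

/-- The realization `Λ(ω)` is uniformly separated: `inf_k ∏_{j ≠ k} ρ(λ_j, λ_k) > 0`.
Since the factors lie in `[0,1)`, the infinite product is the infimum of its finite partial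
products, so this is expressed via finite subproducts. -/
def UniformlySeparated (Λ : RandomBallSeq d Ω P) (ω : Ω) : Prop :=
  ∃ c > (0 : ℝ), ∀ k : ℕ, ∀ F : Finset ℕ, k ∉ F →
    c ≤ ∏ j ∈ F, ballRho (Λ.pt j ω) (Λ.pt k ω)

end RandomBallSeq


theorem sqrt_one_sub_le_aux (x : ℝ) (hx0 : 0 ≤ x) (hx1 : x ≤ 1) :
    Real.sqrt (1 - x) ≤ 1 - x / 2 := by
  have h := Real.sqrt_le_sqrt (show 1 - x ≤ (1 - x / 2) ^ 2 by nlinarith [sq_nonneg x])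
  rwa [Real.sqrt_sq (by linarith)] at h

/-- key pointwise bound -/
theorem ballRho_le_aux {d : ℕ} (z w : EuclideanSpace ℂ (Fin d))
    (hz : ‖z‖ < 1) (hw : ‖w‖ < 1) :
    Real.sqrt (1 - (1 - ‖z‖ ^ 2) * (1 - ‖w‖ ^ 2) / ‖1 - @inner ℂ _ _ w z‖ ^ 2)
      ≤ 1 - (1 - ‖z‖) * (1 - ‖w‖) / 8 := by
  set s := ‖z‖ with hs
  set t := ‖w‖ with ht
  have hs0 : 0 ≤ s := norm_nonneg _
  have ht0 : 0 ≤ t := norm_nonneg _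
  have hip : ‖@inner ℂ _ _ w z‖ ≤ t * s := by
    exact norm_inner_le_norm w z
  set D := ‖1 - @inner ℂ _ _ w z‖ with hD
  have hD_lb : 1 - t * s ≤ D := by
    have h1 : ‖(1 : ℂ)‖ - ‖(@inner ℂ _ _ w z)‖ ≤ ‖1 - @inner ℂ _ _ w z‖ := norm_sub_norm_le _ _
    rw [norm_one] at h1
    rw [hD]
    have := hip
    linarith
  have hD_ub : D ≤ 2 := by
    have h1 : ‖(1 : ℂ) - @inner ℂ _ _ w z‖ ≤ ‖(1 : ℂ)‖ + ‖(@inner ℂ _ _ w z)‖ := norm_sub_le _ _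
    rw [norm_one] at h1
    have := hip
    rw [hD]
    nlinarith
  have hts : t * s < 1 := by nlinarith
  have hD_pos : 0 < D := by linarith
  clear_value D
  set a := (1 - s ^ 2) * (1 - t ^ 2) / D ^ 2 with ha
  clear_value a
  have h1s : (0:ℝ) ≤ 1 - s := by linarith
  have h1t : (0:ℝ) ≤ 1 - t := by linarith
  have hDsq : (1 - t * s) ^ 2 ≤ D ^ 2 := by nlinarith
  have ha_le_one : a ≤ 1 := by
    rw [ha, div_le_one (by positivity)]
    nlinarith [sq_nonneg (s - t)]
  set x := (1 - s) * (1 - t) / 4 with hx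
  clear_value x
  have hx0 : 0 ≤ x := by rw [hx]; nlinarith
  have hx1 : x ≤ 1 := by rw [hx]; nlinarith
  have hst3 : (0:ℝ) ≤ s + t + s * t := by nlinarith [mul_nonneg hs0 ht0]
  have hkey : (1 - s ^ 2) * (1 - t ^ 2) - (1 - s) * (1 - t) = (1 - s) * (1 - t) * (s + t + s * t) := by
    ring
  have hnum : (1 - s) * (1 - t) ≤ (1 - s ^ 2) * (1 - t ^ 2) := by
    nlinarith [mul_nonneg (mul_nonneg h1s h1t) hst3]
  have hnum0 : (0:ℝ) ≤ (1 - s ^ 2) * (1 - t ^ 2) := le_trans (mul_nonneg h1s h1t) hnum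
  have hD4 : D ^ 2 ≤ 4 := by nlinarith
  have hxa : x ≤ a := by
    rw [hx, ha]
    exact div_le_div₀ hnum0 hnum (by positivity) hD4
  have h1 : Real.sqrt (1 - a) ≤ Real.sqrt (1 - x) := by
    apply Real.sqrt_le_sqrt; linarith
  have h2 : Real.sqrt (1 - x) ≤ 1 - x / 2 := sqrt_one_sub_le_aux x hx0 hx1
  have hfin : 1 - x / 2 = 1 - (1 - s) * (1 - t) / 8 := by rw [hx]; ring
  calc Real.sqrt (1 - a) ≤ Real.sqrt (1 - x) := h1
    _ ≤ 1 - x / 2 := h2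
    _ = 1 - (1 - s) * (1 - t) / 8 := hfin

/-- For `d ≥ 3`: if `∑_m N_m 2^{-m} = ∞` then a random sequence in the unit
ball `𝔹_d ⊂ ℂ^d` is almost surely not uniformly separated. -/
theorem random_uniform_separation_ball_divergent (d : ℕ) (hd : 3 ≤ d)
    (Ω : Type*) [MeasurableSpace Ω] (P : MeasureTheory.Measure Ω) [IsProbabilityMeasure P]
    (Λ : RandomBallSeq d Ω P)
    (hsum : ∑' m : ℕ, Λ.N m * (2 : ℝ≥0∞) ^ (-(m : ℤ)) = ⊤) :
    P {ω | Λ.UniformlySeparated ω} = 0 := by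
  have hempty : {ω | Λ.UniformlySeparated ω} = ∅ := by
    rw [Set.eq_empty_iff_forall_notMem]
    intro ω hω
    obtain ⟨c, hc, hsep⟩ := hω
    have hrad0 : ∀ j, 0 ≤ Λ.rad j := fun j => (Λ.rad_mem j).1
    have hrad1 : ∀ j, Λ.rad j < 1 := fun j => (Λ.rad_mem j).2
    have hnorm : ∀ j, ‖Λ.pt j ω‖ = Λ.rad j := by
      intro j
      rw [RandomBallSeq.pt, norm_smul, Λ.ξ_sphere j ω, Real.norm_eq_abs,
        abs_of_nonneg (hrad0 j), mul_one]
    have hc1 : c ≤ 1 := by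
      have h := hsep 0 ∅ (Finset.notMem_empty 0)
      simpa using h
    have h00 : 0 < 1 - Λ.rad 0 := by linarith [hrad1 0]
    have hfac : ∀ j, ballRho (Λ.pt j ω) (Λ.pt 0 ω)
        ≤ 1 - (1 - Λ.rad j) * ((1 - Λ.rad 0) / 8) := by
      intro j
      have h : ballRho (Λ.pt j ω) (Λ.pt 0 ω)
          ≤ 1 - (1 - ‖Λ.pt j ω‖) * (1 - ‖Λ.pt 0 ω‖) / 8 :=
        ballRho_le_aux (Λ.pt j ω) (Λ.pt 0 ω)
          (by rw [hnorm]; exact hrad1 j) (by rw [hnorm]; exact hrad1 0)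
      rw [hnorm j, hnorm 0] at h
      calc ballRho (Λ.pt j ω) (Λ.pt 0 ω) ≤ 1 - (1 - Λ.rad j) * (1 - Λ.rad 0) / 8 := h
        _ = 1 - (1 - Λ.rad j) * ((1 - Λ.rad 0) / 8) := by ring
    set M := (- Real.log c) / ((1 - Λ.rad 0) / 8) with hM
    have hlogc : Real.log c ≤ 0 := Real.log_nonpos hc.le hc1
    have hMpos : 0 ≤ M := div_nonneg (by linarith) (by linarith)
    have hsum_le : ∀ F : Finset ℕ, (0 : ℕ) ∉ F → ∑ j ∈ F, (1 - Λ.rad j) ≤ M := by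
      intro F hF
      have hprod := hsep 0 F hF
      have h1 : ∏ j ∈ F, ballRho (Λ.pt j ω) (Λ.pt 0 ω)
          ≤ ∏ j ∈ F, (1 - (1 - Λ.rad j) * ((1 - Λ.rad 0) / 8)) :=
        Finset.prod_le_prod (fun j _ => Real.sqrt_nonneg _) (fun j _ => hfac j)
      have h2 : ∏ j ∈ F, (1 - (1 - Λ.rad j) * ((1 - Λ.rad 0) / 8))
          ≤ ∏ j ∈ F, Real.exp (-((1 - Λ.rad j) * ((1 - Λ.rad 0) / 8))) := by
        apply Finset.prod_le_prod
        · intro j _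
          nlinarith [hrad0 j, hrad1 j, hrad0 0, hrad1 0,
            mul_nonneg (show (0:ℝ) ≤ 1 - Λ.rad j by linarith [hrad1 j]) h00.le]
        · intro j _
          have h := Real.add_one_le_exp (-((1 - Λ.rad j) * ((1 - Λ.rad 0) / 8)))
          linarith
      rw [← Real.exp_sum] at h2
      have h3 : c ≤ Real.exp (∑ j ∈ F, -((1 - Λ.rad j) * ((1 - Λ.rad 0) / 8))) :=
        le_trans hprod (le_trans h1 h2)
      have h4 : Real.log c ≤ ∑ j ∈ F, -((1 - Λ.rad j) * ((1 - Λ.rad 0) / 8)) := by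
        have h := Real.log_le_log hc h3
        rwa [Real.log_exp] at h
      have h5 : (∑ j ∈ F, (1 - Λ.rad j)) * ((1 - Λ.rad 0) / 8) ≤ - Real.log c := by
        rw [Finset.sum_mul]
        have he : ∑ j ∈ F, -((1 - Λ.rad j) * ((1 - Λ.rad 0) / 8))
            = - ∑ j ∈ F, (1 - Λ.rad j) * ((1 - Λ.rad 0) / 8) := by
          rw [Finset.sum_neg_distrib]
        rw [he] at h4
        linarith
      rw [hM, le_div_iff₀ (by linarith : (0:ℝ) < (1 - Λ.rad 0) / 8)]
      exact h5
    have hsum_le' : ∀ F : Finset ℕ, ∑ j ∈ F, (1 - Λ.rad j) ≤ M + 1 := by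
      intro F
      by_cases h0 : 0 ∈ F
      · have h := hsum_le (F.erase 0) (Finset.notMem_erase 0 F)
        have he : ∑ j ∈ F.erase 0, (1 - Λ.rad j) + (1 - Λ.rad 0) = ∑ j ∈ F, (1 - Λ.rad j) :=
          Finset.sum_erase_add F _ h0
        have := hrad0 0
        linarith
      · have h := hsum_le F h0
        linarith
    set f : ℕ → ℝ≥0∞ := fun j => ENNReal.ofReal (1 - Λ.rad j) with hf
    have hT : ∑' j, f j ≤ ENNReal.ofReal (M + 1) := by
      rw [ENNReal.tsum_eq_iSup_sum]
      apply iSup_le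
      intro F
      calc ∑ j ∈ F, f j = ENNReal.ofReal (∑ j ∈ F, (1 - Λ.rad j)) :=
            (ENNReal.ofReal_sum_of_nonneg (fun j _ => by linarith [hrad1 j])).symm
        _ ≤ ENNReal.ofReal (M + 1) := ENNReal.ofReal_le_ofReal (hsum_le' F)
    set S : ℕ → Set ℕ := fun m => {j : ℕ |
      (m : ℝ) * Real.log 2 / 2 ≤ (1 / 2) * Real.log ((1 + Λ.rad j) / (1 - Λ.rad j)) ∧
      (1 / 2) * Real.log ((1 + Λ.rad j) / (1 - Λ.rad j)) < ((m : ℝ) + 1) * Real.log 2 / 2}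
      with hS
    have hN : ∀ m, Λ.N m = (S m).encard := fun m => rfl
    have hlog2 : (0:ℝ) < Real.log 2 := Real.log_pos one_lt_two
    have hmem : ∀ m : ℕ, ∀ j ∈ S m, ((2:ℝ) ^ (m + 1))⁻¹ ≤ 1 - Λ.rad j := by
      intro m j hj
      obtain ⟨_, h2⟩ := hj
      have hrj1 : Λ.rad j < 1 := hrad1 j
      have hrj0 : 0 ≤ Λ.rad j := hrad0 j
      have hpos : (0:ℝ) < (1 + Λ.rad j) / (1 - Λ.rad j) :=
        div_pos (by linarith) (by linarith)
      have h2m : ((m:ℝ) + 1) * Real.log 2 = Real.log ((2:ℝ) ^ (m + 1)) := by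
        rw [Real.log_pow]; push_cast; ring
      have hlog : Real.log ((1 + Λ.rad j) / (1 - Λ.rad j)) < Real.log ((2:ℝ) ^ (m + 1)) := by
        rw [← h2m]; linarith
      have hlt : (1 + Λ.rad j) / (1 - Λ.rad j) < (2:ℝ) ^ (m + 1) :=
        (Real.log_lt_log_iff hpos (by positivity)).mp hlog
      have h2pos : (0:ℝ) < (2:ℝ) ^ (m + 1) := by positivity
      rw [div_lt_iff₀ (by linarith)] at hlt
      rw [inv_eq_one_div, div_le_iff₀ h2pos]
      nlinarith
    have hzpow : ∀ m : ℕ, (2:ℝ≥0∞) ^ (-(m:ℤ)) = 2 * ENNReal.ofReal (((2:ℝ) ^ (m + 1))⁻¹) := by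
      intro m
      have h1 : ENNReal.ofReal (((2:ℝ) ^ (m + 1))⁻¹) = ((2:ℝ≥0∞) ^ (m + 1))⁻¹ := by
        rw [ENNReal.ofReal_inv_of_pos (by positivity), ENNReal.ofReal_pow (by norm_num)]
        norm_num
      rw [h1]
      have hb0 : ((2:ℝ≥0∞) ^ (m + 1)) ≠ 0 := by
        exact pow_ne_zero _ (by norm_num)
      have hbt : ((2:ℝ≥0∞) ^ (m + 1)) ≠ ⊤ := by
        exact ENNReal.pow_ne_top (by norm_num)
      have hexp : (-(m:ℤ) + ((m + 1 : ℕ) : ℤ)) = 1 := by push_cast; ring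
      have hkey : (2:ℝ≥0∞) ^ (-(m:ℤ)) * (2:ℝ≥0∞) ^ (m + 1) = 2 := by
        rw [← zpow_natCast (2:ℝ≥0∞) (m + 1), ← ENNReal.zpow_add (by norm_num) (by norm_num),
          hexp, zpow_one]
      calc (2:ℝ≥0∞) ^ (-(m:ℤ))
          = (2:ℝ≥0∞) ^ (-(m:ℤ)) * ((2:ℝ≥0∞) ^ (m + 1) * ((2:ℝ≥0∞) ^ (m + 1))⁻¹) := by
            rw [ENNReal.mul_inv_cancel hb0 hbt, mul_one]
        _ = ((2:ℝ≥0∞) ^ (-(m:ℤ)) * (2:ℝ≥0∞) ^ (m + 1)) * ((2:ℝ≥0∞) ^ (m + 1))⁻¹ := by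
            rw [mul_assoc]
        _ = 2 * ((2:ℝ≥0∞) ^ (m + 1))⁻¹ := by rw [hkey]
    have hNm : ∀ m : ℕ, Λ.N m * (2:ℝ≥0∞) ^ (-(m:ℤ)) ≤ 2 * ∑' (j : S m), f j := by
      intro m
      have h1 : ∑' (_ : S m), ENNReal.ofReal (((2:ℝ) ^ (m + 1))⁻¹) ≤ ∑' (j : S m), f j :=
        ENNReal.tsum_le_tsum (fun j => ENNReal.ofReal_le_ofReal (hmem m j j.2))
      rw [ENNReal.tsum_set_const] at h1
      calc Λ.N m * (2:ℝ≥0∞) ^ (-(m:ℤ))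
          = (S m).encard * (2 * ENNReal.ofReal (((2:ℝ) ^ (m + 1))⁻¹)) := by
            rw [hN, hzpow]
        _ = 2 * ((S m).encard * ENNReal.ofReal (((2:ℝ) ^ (m + 1))⁻¹)) := by ring
        _ ≤ 2 * ∑' (j : S m), f j := mul_le_mul_right h1 2
    have hdisj : ∀ m m' : ℕ, ∀ j : ℕ, j ∈ S m → j ∈ S m' → m = m' := by
      intro m m' j hm hm'
      by_contra hne
      obtain ⟨h1, h2⟩ := hm
      obtain ⟨h3, h4⟩ := hm'
      rcases lt_or_gt_of_ne hne with h | h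
      · have hc : (m:ℝ) + 1 ≤ (m':ℝ) := by exact_mod_cast h
        nlinarith
      · have hc : (m':ℝ) + 1 ≤ (m:ℝ) := by exact_mod_cast h
        nlinarith
    have hUnion : ∑' m, ∑' (j : S m), f j ≤ ∑' j, f j := by
      have hinj : Function.Injective (fun p : Σ m : ℕ, S m => (p.2 : ℕ)) := by
        rintro ⟨m, j⟩ ⟨m', j'⟩ h
        simp only at h
        have hm : m = m' := hdisj m m' (j : ℕ) j.2 (by rw [h]; exact j'.2)
        subst hm
        simp only [Sigma.mk.inj_iff, heq_eq_eq]
        exact ⟨trivial, Subtype.ext h⟩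
      calc ∑' m, ∑' (j : S m), f j = ∑' p : Σ m : ℕ, S m, f p.2 :=
            (ENNReal.tsum_sigma' (fun p : Σ m : ℕ, S m => f p.2)).symm
        _ ≤ ∑' j, f j := ENNReal.tsum_comp_le_tsum_of_injective hinj f
    have htot : (⊤ : ℝ≥0∞) ≤ 2 * ∑' j, f j := by
      rw [← hsum]
      calc ∑' m, Λ.N m * (2:ℝ≥0∞) ^ (-(m:ℤ)) ≤ ∑' m, 2 * ∑' (j : S m), f j :=
            ENNReal.tsum_le_tsum hNm
        _ = 2 * ∑' m, ∑' (j : S m), f j := ENNReal.tsum_mul_left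
        _ ≤ 2 * ∑' j, f j := mul_le_mul_right hUnion 2
    have hfin : 2 * ∑' j, f j < ⊤ := by
      have h2 : 2 * ∑' j, f j ≤ 2 * ENNReal.ofReal (M + 1) := mul_le_mul_right hT 2
      exact lt_of_le_of_lt h2 (ENNReal.mul_lt_top (by norm_num) ENNReal.ofReal_lt_top)
    exact lt_irrefl _ (lt_of_le_of_lt htot hfin)
  rw [hempty]
  exact measure_empty
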